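/- (Correctness of the ghost-component algorithm for multiplication.) Let w, w′ ∈ W(k[X₁,…,Xₘ]) and let G₀,…,G_{n−1}, H₀,…,H_{n−1} ∈ W(k)[X₁,…,Xₘ] satisfy π(G_i) = w_i and π(H_i) = w′_i for every i ∈ {0,…,n−1}. Suppose R₀,…,R_{n−1} ∈ W(k)[X₁,…,Xₘ] satisfy, for every j ∈ {0,…,n−1}, the ghost-component equation Σ_{i=0}^{j} p^i R_i^{p^{j−i}} = (Σ_{i=0}^{j} p^i G_i^{p^{j−i}}) · (Σ_{i=0}^{j} p^i H_i^{p^{j−i}}). Then π(R_i) = (w · w′)_i for every i ∈ {0,…,n−1}. -/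
import Mathlib
set_option maxHeartbeats 1000000

noncomputable section

/-- The ring homomorphism `π : W(k)[X₁,…,Xₘ] → k[X₁,…,Xₘ]` reducing each coefficient
to its 0-th Witt coordinate. -/
def wittPi (p : ℕ) [Fact p.Prime] (m : ℕ) (k : Type*) [CommRing k] :
    MvPolynomial (Fin m) (WittVector p k) →+* MvPolynomial (Fin m) k :=
  MvPolynomial.map (WittVector.constantCoeff)

/-- The ring homomorphism `ε : W(k)[X₁,…,Xₘ] → W(k[X₁,…,Xₘ])` which on `W(k)` is
induced by functoriality of `W` from the inclusion `k → k[X₁,…,Xₘ]` and sends each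
`Xᵢ` to the Teichmüller lift `[Xᵢ]`. -/
def wittEps (p : ℕ) [Fact p.Prime] (m : ℕ) (k : Type*) [CommRing k] :
    MvPolynomial (Fin m) (WittVector p k) →+* WittVector p (MvPolynomial (Fin m) k) :=
  MvPolynomial.eval₂Hom (WittVector.map (MvPolynomial.C))
    (fun i => WittVector.teichmuller p (MvPolynomial.X i))

/-- `W(k)` is `p`-torsion-free for `k` reduced of characteristic `p`. -/
lemma aux_witt_p_torsionfree (p : ℕ) [Fact p.Prime] (k : Type*) [CommRing k]
    [IsReduced k] [CharP k p] (x : WittVector p k) (h : x * (p : WittVector p k) = 0) :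
    x = 0 := by
  rw [← WittVector.verschiebung_frobenius x] at h
  have hf : WittVector.frobenius x = 0 := by
    apply WittVector.ext
    intro i
    have := congrArg (fun y => WittVector.coeff y (i + 1)) h
    simpa [WittVector.verschiebung_coeff_succ] using this
  apply WittVector.ext
  intro i
  have hx : x.coeff i ^ p = 0 := by
    have := congrArg (fun y => WittVector.coeff y i) hf
    simpa [WittVector.coeff_frobenius_charP] using this
  rw [WittVector.zero_coeff]
  exact IsReduced.eq_zero _ ⟨p, hx⟩

/-- `W(k)[X₁,…,Xₘ]` is `p`-torsion-free. -/
lemma aux_poly_p_torsionfree (p : ℕ) [Fact p.Prime] (m : ℕ) (k : Type*) [CommRing k]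
    [IsReduced k] [CharP k p] (f : MvPolynomial (Fin m) (WittVector p k))
    (h : (p : MvPolynomial (Fin m) (WittVector p k)) * f = 0) : f = 0 := by
  apply MvPolynomial.ext
  intro d
  have : (p : MvPolynomial (Fin m) (WittVector p k)) = MvPolynomial.C (p : WittVector p k) := by
    simp
  rw [this] at h
  have := congrArg (fun g => MvPolynomial.coeff d g) h
  simp only [MvPolynomial.coeff_C_mul, MvPolynomial.coeff_zero] at this
  rw [MvPolynomial.coeff_zero]
  exact aux_witt_p_torsionfree p k _ (by rw [mul_comm]; exact this)

theorem stmt14 (p m n : ℕ) [Fact p.Prime] (hm : 1 ≤ m) (hn : 1 ≤ n)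
    (k : Type*) [CommRing k] [IsReduced k] [CharP k p]
    (w w' : WittVector p (MvPolynomial (Fin m) k))
    (G H R : ℕ → MvPolynomial (Fin m) (WittVector p k))
    (hG : ∀ i < n, wittPi p m k (G i) = w.coeff i)
    (hH : ∀ i < n, wittPi p m k (H i) = w'.coeff i)
    (hR : ∀ j < n,
      ∑ i ∈ Finset.range (j + 1),
          (p : MvPolynomial (Fin m) (WittVector p k)) ^ i * (R i) ^ p ^ (j - i)
        = (∑ i ∈ Finset.range (j + 1),
              (p : MvPolynomial (Fin m) (WittVector p k)) ^ i * (G i) ^ p ^ (j - i))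
            * ∑ i ∈ Finset.range (j + 1),
                (p : MvPolynomial (Fin m) (WittVector p k)) ^ i * (H i) ^ p ^ (j - i)) :
    ∀ i < n, wittPi p m k (R i) = (w * w').coeff i := by
  letI A := MvPolynomial (Fin m) (WittVector p k)
  let x : WittVector p A := WittVector.mk p R
  let g : WittVector p A := WittVector.mk p G
  let h : WittVector p A := WittVector.mk p H
  -- the ghost components of `x` and `g * h` agree below `n`
  have ghost_eq : ∀ j < n, WittVector.ghostComponent j x = WittVector.ghostComponent j (g * h) := by
    intro j hj
    rw [map_mul]
    simp only [WittVector.ghostComponent_apply, aeval_wittPolynomial, WittVector.coeff_mk, x, g, h]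
    exact hR j hj
  -- p-torsion-freeness : cancel p^i
  have cancel : ∀ (i : ℕ) (a b : A), (p : A) ^ i * a = (p : A) ^ i * b → a = b := by
    intro i
    induction i with
    | zero => intro a b hab; simpa using hab
    | succ i ih =>
      intro a b hab
      rw [pow_succ, mul_assoc, mul_assoc] at hab
      have h2 := ih _ _ hab
      have h3 : (p : A) * (a - b) = 0 := by rw [mul_sub, h2, sub_self]
      have h4 := aux_poly_p_torsionfree p m k _ h3
      exact sub_eq_zero.mp h4
  -- coefficients of `x` and `g * h` agree below `n`
  have coeff_eq : ∀ i < n, x.coeff i = (g * h).coeff i := by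
    intro i hi
    induction i using Nat.strong_induction_on with
    | _ i ih =>
      have hg := ghost_eq i hi
      simp only [WittVector.ghostComponent_apply, aeval_wittPolynomial] at hg
      rw [Finset.sum_range_succ, Finset.sum_range_succ] at hg
      have hsum : ∑ j ∈ Finset.range i, (p : A) ^ j * x.coeff j ^ p ^ (i - j)
          = ∑ j ∈ Finset.range i, (p : A) ^ j * (g * h).coeff j ^ p ^ (i - j) := by
        apply Finset.sum_congr rfl
        intro j hj
        rw [ih j (Finset.mem_range.mp hj) (lt_trans (Finset.mem_range.mp hj) hi)]
      rw [hsum] at hg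
      have h5 := add_left_cancel hg
      simp only [Nat.sub_self, pow_zero, pow_one] at h5
      exact cancel i _ _ h5
  -- now push through π
  intro i hi
  have hx : wittPi p m k (R i) = (WittVector.map (wittPi p m k) (g * h)).coeff i := by
    rw [WittVector.map_coeff, ← coeff_eq i hi]
    rfl
  rw [hx, map_mul]
  -- compare truncations
  have htr : WittVector.truncate n (WittVector.map (wittPi p m k) g * WittVector.map (wittPi p m k) h)
      = WittVector.truncate n (w * w') := by
    rw [map_mul, map_mul]
    congr 1
    · apply TruncatedWittVector.ext
      intro j
      rw [WittVector.coeff_truncate, WittVector.coeff_truncate, WittVector.map_coeff]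
      exact hG j j.is_lt
    · apply TruncatedWittVector.ext
      intro j
      rw [WittVector.coeff_truncate, WittVector.coeff_truncate, WittVector.map_coeff]
      exact hH j j.is_lt
  have h6 := congrArg (fun y => TruncatedWittVector.coeff ⟨i, hi⟩ y) htr
  simp only [WittVector.coeff_truncate] at h6
  exact h6
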